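/- Let k=2^n and π_n the bit-reversal permutation. Then 4k·∑_{j=0}^{k−1} saw(j/k)·saw(π_n(j)/k) = (k·log₂k)/2 − k + 1, i.e. equals nk/2 − k + 1. -/

import Mathlib

open Classical in
/-- The saw-tooth function `saw x = x - ⌊x⌋ - 1/2 + δ(x)/2`, where `δ(x) = 1` iff `x ∈ ℤ`. -/
noncomputable def saw (x : ℝ) : ℝ :=
  x - Int.floor x - 1/2 + (if ∃ m : ℤ, (m : ℝ) = x then (1:ℝ)/2 else 0)

/-- The bit-reversal permutation on `n` bits: reverses the binary digits of `j`. -/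
def bitrev (n j : ℕ) : ℕ := ∑ i ∈ Finset.range n, (j / 2 ^ i % 2) * 2 ^ (n - 1 - i)

lemma sum_range_two_mul (m : ℕ) (F : ℕ → ℝ) :
    ∑ j ∈ Finset.range (2*m), F j = ∑ q ∈ Finset.range m, (F (2*q) + F (2*q+1)) := by
  induction m with
  | zero => simp
  | succ m ih =>
    rw [show 2*(m+1) = 2*m+1+1 from rfl, Finset.sum_range_succ, Finset.sum_range_succ, ih,
      Finset.sum_range_succ]
    ring

lemma bitrev_zero_right (n : ℕ) : bitrev n 0 = 0 := by simp [bitrev]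

lemma bitrev_succ (n q b : ℕ) (hb : b < 2) :
    bitrev (n+1) (2*q+b) = b * 2^n + bitrev n q := by
  unfold bitrev
  rw [Finset.sum_range_succ', add_comm]
  congr 1
  · have : (2*q+b) % 2 = b := by omega
    simp [this]
  · apply Finset.sum_congr rfl
    intro i _
    have h1 : (2*q+b) / 2^(i+1) = q / 2^i := by
      rw [pow_succ', ← Nat.div_div_eq_div_mul, Nat.mul_add_div (by norm_num),
        Nat.div_eq_of_lt hb, Nat.add_zero]
    rw [h1, show n+1-1-(i+1) = n-1-i by omega]

lemma bitrev_even (n q : ℕ) : bitrev (n+1) (2*q) = bitrev n q := by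
  have := bitrev_succ n q 0 (by norm_num); simpa using this

lemma bitrev_odd (n q : ℕ) : bitrev (n+1) (2*q+1) = 2^n + bitrev n q := by
  have := bitrev_succ n q 1 (by norm_num); simpa using this

lemma bitrev_lt (n : ℕ) : ∀ j, bitrev n j < 2^n := by
  induction n with
  | zero => intro j; simp [bitrev]
  | succ n ih =>
    intro j
    have hj : j = 2*(j/2) + j%2 := by omega
    have hb : j % 2 < 2 := by omega
    rw [hj, bitrev_succ n (j/2) (j%2) hb]
    have h1 := ih (j/2)
    have h2 : j % 2 * 2^n ≤ 2^n := by
      rcases Nat.mod_two_eq_zero_or_one j with h | h <;> simp [h]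
    have : (2:ℕ)^(n+1) = 2^n + 2^n := by rw [pow_succ]; omega
    omega

lemma bitrev_eq_zero {n j : ℕ} (hj : j < 2^n) (h : bitrev n j = 0) : j = 0 := by
  induction n generalizing j with
  | zero => simpa using hj
  | succ n ih =>
    have hj2 : j = 2*(j/2) + j%2 := by omega
    have hb : j % 2 < 2 := by omega
    rw [hj2, bitrev_succ n (j/2) (j%2) hb] at h
    have hpow : 0 < (2:ℕ)^n := Nat.pow_pos (by norm_num)
    have h1 : j % 2 = 0 := by
      rcases Nat.mod_two_eq_zero_or_one j with hh | hh
      · exact hh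
      · rw [hh] at h; omega
    have h2 : bitrev n (j/2) = 0 := by omega
    have hlt : j/2 < 2^n := by
      have : (2:ℕ)^(n+1) = 2*2^n := by rw [pow_succ]; ring
      omega
    have := ih hlt h2
    omega

lemma sumA (n : ℕ) : ∑ j ∈ Finset.range (2^n), (j:ℝ) = ((2:ℝ)^n * 2^n - 2^n)/2 := by
  induction n with
  | zero => simp
  | succ n ih =>
    rw [pow_succ, mul_comm, sum_range_two_mul]
    have : ∀ q ∈ Finset.range (2^n), (((2*q:ℕ):ℝ) + ((2*q+1:ℕ):ℝ)) = 4*(q:ℝ) + 1 := by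
      intro q _; push_cast; ring
    rw [Finset.sum_congr rfl this, Finset.sum_add_distrib, ← Finset.mul_sum, ih,
      Finset.sum_const, Finset.card_range]
    push_cast
    rw [pow_succ]
    ring

lemma sumB (n : ℕ) : ∑ j ∈ Finset.range (2^n), (bitrev n j : ℝ) = ((2:ℝ)^n * 2^n - 2^n)/2 := by
  induction n with
  | zero => simp [bitrev]
  | succ n ih =>
    rw [pow_succ, mul_comm, sum_range_two_mul]
    have : ∀ q ∈ Finset.range (2^n),
        ((bitrev (n+1) (2*q) : ℝ) + (bitrev (n+1) (2*q+1) : ℝ))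
          = 2*(bitrev n q : ℝ) + 2^n := by
      intro q _; rw [bitrev_even, bitrev_odd]; push_cast; ring
    rw [Finset.sum_congr rfl this, Finset.sum_add_distrib, ← Finset.mul_sum, ih,
      Finset.sum_const, Finset.card_range]
    push_cast
    rw [pow_succ]
    ring

lemma sumC (n : ℕ) : ∑ j ∈ Finset.range (2^n), (j:ℝ) * (bitrev n j : ℝ)
    = (n:ℝ) * (2^n*2^n)/8 + 2^n*((2:ℝ)^n-1)^2/4 := by
  induction n with
  | zero => simp [bitrev]
  | succ n ih =>
    rw [pow_succ, mul_comm, sum_range_two_mul]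
    have : ∀ q ∈ Finset.range (2^n),
        (((2*q:ℕ):ℝ) * (bitrev (n+1) (2*q) : ℝ) + ((2*q+1:ℕ):ℝ) * (bitrev (n+1) (2*q+1) : ℝ))
          = 4*((q:ℝ)*(bitrev n q : ℝ)) + (bitrev n q : ℝ) + (2*2^n)*(q:ℝ) + 2^n := by
      intro q _; rw [bitrev_even, bitrev_odd]; push_cast; ring
    rw [Finset.sum_congr rfl this, Finset.sum_add_distrib, Finset.sum_add_distrib,
      Finset.sum_add_distrib, ← Finset.mul_sum, ← Finset.mul_sum, ih, sumB, sumA,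
      Finset.sum_const, Finset.card_range]
    push_cast
    rw [pow_succ]
    ring

lemma saw_div {j k : ℕ} (hk : 0 < k) (hj : j < k) :
    saw ((j:ℝ)/(k:ℝ)) = (j:ℝ)/k - 1/2 + (if j = 0 then (1:ℝ)/2 else 0) := by
  have hkR : (0:ℝ) < (k:ℝ) := by exact_mod_cast hk
  have h0 : (0:ℝ) ≤ (j:ℝ)/k := by positivity
  have h1 : (j:ℝ)/k < 1 := by
    rw [div_lt_one hkR]; exact_mod_cast hj
  have hiff : (∃ m : ℤ, (m:ℝ) = (j:ℝ)/(k:ℝ)) ↔ j = 0 := by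
    constructor
    · rintro ⟨m, hm⟩
      have hm0 : (0:ℝ) ≤ (m:ℝ) := hm ▸ h0
      have hm1 : (m:ℝ) < 1 := hm ▸ h1
      have : m = 0 := by exact_mod_cast Int.le_antisymm (by exact_mod_cast hm1.le |> fun h => Int.lt_add_one_iff.mp (by exact_mod_cast hm1)) (by exact_mod_cast hm0)
      rw [this] at hm
      have : (j:ℝ) = 0 := by
        field_simp at hm
        simpa using hm.symm
      exact_mod_cast this
    · rintro rfl; exact ⟨0, by simp⟩
  unfold saw
  rw [Int.floor_eq_zero_iff.mpr ⟨h0, h1⟩]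
  simp only [hiff]
  simp

theorem saw_prod_sum_bitrev (n k : ℕ) (hk : k = 2 ^ n) :
    4 * (k : ℝ) * ∑ j ∈ Finset.range k,
        saw ((j : ℝ) / (k : ℝ)) * saw ((bitrev n j : ℝ) / (k : ℝ))
      = (k : ℝ) * (n : ℝ) / 2 - (k : ℝ) + 1 := by
  subst hk
  have hK : 0 < 2^n := Nat.pow_pos (by norm_num)
  have hKR : (0:ℝ) < ((2^n:ℕ):ℝ) := by exact_mod_cast hK
  have hterm : ∀ j ∈ Finset.range (2^n),
      saw ((j:ℝ)/((2^n:ℕ):ℝ)) * saw ((bitrev n j : ℝ)/((2^n:ℕ):ℝ))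
        = ((j:ℝ)/((2^n:ℕ):ℝ) - 1/2) * ((bitrev n j : ℝ)/((2^n:ℕ):ℝ) - 1/2)
          - (if j = 0 then (1:ℝ)/4 else 0) := by
    intro j hj
    have hjlt : j < 2^n := Finset.mem_range.mp hj
    rw [saw_div hK hjlt, saw_div hK (bitrev_lt n j)]
    by_cases h : j = 0
    · subst h
      rw [bitrev_zero_right]
      norm_num
    · have hr : bitrev n j ≠ 0 := fun hh => h (bitrev_eq_zero hjlt hh)
      rw [if_neg h, if_neg hr, if_neg h]
      ring
  rw [Finset.sum_congr rfl hterm, Finset.sum_sub_distrib,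
    Finset.sum_ite_eq' (Finset.range (2^n)) 0 (fun _ => (1:ℝ)/4),
    if_pos (Finset.mem_range.mpr hK)]
  have e1 : ∀ j ∈ Finset.range (2^n),
      ((j:ℝ)/((2^n:ℕ):ℝ) - 1/2) * ((bitrev n j : ℝ)/((2^n:ℕ):ℝ) - 1/2)
        = (1/(((2^n:ℕ):ℝ)*((2^n:ℕ):ℝ))) * ((j:ℝ)*(bitrev n j : ℝ))
          - (1/(2*((2^n:ℕ):ℝ)))*(j:ℝ) - (1/(2*((2^n:ℕ):ℝ)))*(bitrev n j : ℝ) + 1/4 := by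
    intro j _; ring
  rw [Finset.sum_congr rfl e1, Finset.sum_add_distrib, Finset.sum_sub_distrib,
    Finset.sum_sub_distrib, ← Finset.mul_sum, ← Finset.mul_sum, ← Finset.mul_sum,
    sumA, sumB, sumC, Finset.sum_const, Finset.card_range]
  have h2 : ((2:ℝ))^n ≠ 0 := by positivity
  push_cast
  simp only [nsmul_eq_mul]
  field_simp
  push_cast
  ring
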